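/- arXiv:2309.03847 — 4 statements merged into one kernel-verified Lean document; each statement's English description precedes it below -/
import Mathlib

section
/- Let k ≥ 1 be an integer, α ∈ (0,1), let f_1,…,f_k be probability measures on a measurable space Ω, let w ∈ Δ_k, and let g = ∑_{i=1}^k w_i·f_i. Then there exist γ ∈ [0,α), a probability measure h on Ω, a nonempty subset S ⊆ {1,…,k}, and weights (v_i)_{i∈S} with v_i ≥ α/k for all i ∈ S and ∑_{i∈S} v_i = 1, such that g = γ·h + (1−γ)·∑_{i∈S} v_i·f_i. -/
open MeasureTheory

theorem dense_mixture_approximation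
    {Ω : Type*} [MeasurableSpace Ω] (k : ℕ) (hk : 1 ≤ k) (α : ℝ)
    (hα : α ∈ Set.Ioo (0 : ℝ) 1)
    (f : Fin k → Measure Ω) (hf : ∀ i, IsProbabilityMeasure (f i))
    (w : Fin k → ℝ) (hw : ∀ i, 0 ≤ w i) (hw1 : ∑ i, w i = 1) :
    ∃ (γ : ℝ), γ ∈ Set.Ico (0 : ℝ) α ∧
    ∃ (h : Measure Ω), IsProbabilityMeasure h ∧
    ∃ (S : Finset (Fin k)), S.Nonempty ∧
    ∃ (v : Fin k → ℝ),
      (∀ i ∈ S, α / k ≤ v i) ∧ (∑ i ∈ S, v i = 1) ∧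
      (∑ i, ENNReal.ofReal (w i) • f i)
        = ENNReal.ofReal γ • h
          + ENNReal.ofReal (1 - γ) • (∑ i ∈ S, ENNReal.ofReal (v i) • f i) := by
  classical
  have hk0 : (0:ℝ) < k := by exact_mod_cast hk
  have hne : Nonempty (Fin k) := ⟨⟨0, hk⟩⟩
  set S : Finset (Fin k) := Finset.univ.filter (fun i => α / k ≤ w i) with hSdef
  set γ : ℝ := ∑ i ∈ Sᶜ, w i with hγdef
  set σ : ℝ := ∑ i ∈ S, w i with hσdef
  have hsum : σ + γ = 1 := by
    rw [hσdef, hγdef, Finset.sum_add_sum_compl]; exact hw1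
  have hmemS : ∀ i, i ∈ S ↔ α / k ≤ w i := by
    intro i; simp [hSdef]
  have hSne : S.Nonempty := by
    by_contra hemp
    rw [Finset.not_nonempty_iff_eq_empty] at hemp
    have hlt : ∀ i, w i < α / k := by
      intro i
      by_contra hle
      push_neg at hle
      have : i ∈ S := (hmemS i).2 hle
      simp [hemp] at this
    have h1 : (1:ℝ) < α := by
      calc (1:ℝ) = ∑ i, w i := hw1.symm
        _ < ∑ _i : Fin k, α / k :=
            Finset.sum_lt_sum_of_nonempty Finset.univ_nonempty (fun i _ => hlt i)
        _ = α := by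
            rw [Finset.sum_const, Finset.card_univ, Fintype.card_fin, nsmul_eq_mul]
            field_simp
    linarith [hα.2]
  have hγnn : 0 ≤ γ := Finset.sum_nonneg (fun i _ => hw i)
  have hγlt : γ < α := by
    rcases Finset.eq_empty_or_nonempty Sᶜ with hc | hc
    · rw [hγdef, hc, Finset.sum_empty]; exact hα.1
    · have h1 : γ < ∑ _i ∈ Sᶜ, α / k := by
        refine Finset.sum_lt_sum_of_nonempty hc (fun i hi => ?_)
        rw [Finset.mem_compl, hmemS] at hi
        push_neg at hi; exact hi
      have h2 : ∑ _i ∈ Sᶜ, α / k = (Sᶜ.card : ℝ) * (α / k) := by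
        rw [Finset.sum_const, nsmul_eq_mul]
      have h3 : (Sᶜ.card : ℝ) ≤ k := by
        have := Finset.card_le_univ Sᶜ
        rw [Fintype.card_fin] at this
        exact_mod_cast this
      have hαk : 0 < α / k := div_pos hα.1 hk0
      calc γ < (Sᶜ.card : ℝ) * (α / k) := h2 ▸ h1
        _ ≤ (k : ℝ) * (α / k) := by nlinarith
        _ = α := by field_simp
  have hσ1 : σ = 1 - γ := by linarith
  have hσpos : 0 < σ := by rw [hσ1]; linarith [hα.2]
  have hσle1 : σ ≤ 1 := by linarith
  -- v
  have hvbd : ∀ i ∈ S, α / k ≤ w i / σ := by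
    intro i hi
    have h1 : α / k ≤ w i := (hmemS i).1 hi
    rw [le_div_iff₀ hσpos]
    nlinarith [div_pos hα.1 hk0]
  have hvsum : ∑ i ∈ S, w i / σ = 1 := by
    rw [← Finset.sum_div, ← hσdef]
    field_simp
  have key : ∀ i ∈ S,
      ENNReal.ofReal (1 - γ) * ENNReal.ofReal (w i / σ) = ENNReal.ofReal (w i) := by
    intro i hi
    rw [← ENNReal.ofReal_mul (by linarith)]
    congr 1
    rw [← hσ1]
    field_simp
  have hsplit : (∑ i, ENNReal.ofReal (w i) • f i)
      = (∑ i ∈ Sᶜ, ENNReal.ofReal (w i) • f i) + ∑ i ∈ S, ENNReal.ofReal (w i) • f i := by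
    rw [add_comm, Finset.sum_add_sum_compl]
  have hRHS2 : ENNReal.ofReal (1 - γ) • (∑ i ∈ S, ENNReal.ofReal (w i / σ) • f i)
      = ∑ i ∈ S, ENNReal.ofReal (w i) • f i := by
    rw [Finset.smul_sum]
    refine Finset.sum_congr rfl (fun i hi => ?_)
    rw [smul_smul, key i hi]
  by_cases hγ0 : γ = 0
  · refine ⟨γ, ⟨hγnn, hγlt⟩, f ⟨0, hk⟩, hf _, S, hSne, fun i => w i / σ,
      hvbd, hvsum, ?_⟩
    have hz : ∀ i ∈ Sᶜ, w i = 0 := by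
      intro i hi
      exact (Finset.sum_eq_zero_iff_of_nonneg (fun j _ => hw j)).1 (hγdef.symm.trans hγ0) i hi
    rw [hsplit, hRHS2, hγ0]
    simp only [ENNReal.ofReal_zero, zero_smul]
    congr 1
    refine Finset.sum_eq_zero (fun i hi => ?_)
    rw [hz i hi]; simp
  · have hγpos : 0 < γ := lt_of_le_of_ne hγnn (Ne.symm hγ0)
    set h : Measure Ω := ∑ i ∈ Sᶜ, ENNReal.ofReal (w i / γ) • f i with hhdef
    have hprob : IsProbabilityMeasure h := by
      constructor
      rw [hhdef]
      have : (∑ i ∈ Sᶜ, ENNReal.ofReal (w i / γ) • f i) Set.univ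
          = ∑ i ∈ Sᶜ, ENNReal.ofReal (w i / γ) * (f i Set.univ) := by
        simp [Measure.finset_sum_apply, Measure.smul_apply, smul_eq_mul]
      rw [this]
      have : ∀ i ∈ Sᶜ, ENNReal.ofReal (w i / γ) * (f i Set.univ) = ENNReal.ofReal (w i / γ) := by
        intro i _
        rw [(hf i).measure_univ, mul_one]
      rw [Finset.sum_congr rfl this,
        ← ENNReal.ofReal_sum_of_nonneg (fun i _ => div_nonneg (hw i) hγnn)]
      rw [← Finset.sum_div, ← hγdef]
      field_simp
      exact ENNReal.ofReal_one
    have hh : ENNReal.ofReal γ • h = ∑ i ∈ Sᶜ, ENNReal.ofReal (w i) • f i := by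
      rw [hhdef, Finset.smul_sum]
      refine Finset.sum_congr rfl (fun i hi => ?_)
      rw [smul_smul, ← ENNReal.ofReal_mul hγnn]
      congr 2
      field_simp
    exact ⟨γ, ⟨hγnn, hγlt⟩, h, hprob, S, hSne, fun i => w i / σ, hvbd, hvsum,
      by rw [hsplit, hRHS2, hh]⟩
end

section
/- Let 0 < α < γ < 1, let k, t ≥ 1 be integers, and let F be a set of probability measures on a measurable space Ω. Suppose there exists C ⊆ F such that: (i) for every f ∈ F there is c ∈ C with dTV(f,c) ≤ α, and (ii) for every f ∈ F, the set {c ∈ C : dTV(f,c) ≤ γ} has at most t elements. Then there exists J ⊆ Δ_k × F^k such that: (i) for every (w, f) ∈ Δ_k × F^k there is (w', f') ∈ J with κ_mix((w,f),(w',f')) ≤ α, and (ii) for every (w, f) ∈ Δ_k × F^k, the set {(w',f') ∈ J : κ_mix((w,f),(w',f')) ≤ γ} has at most k!·t^k·⌈k/α⌉^k elements. -/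
open MeasureTheory

/-- Total variation distance between two measures:
`dTV(μ,ν) = sup` over measurable sets `A` of `|μ(A) − ν(A)|`. -/
noncomputable def tvDist {Ω : Type*} [MeasurableSpace Ω] (μ ν : Measure Ω) : ℝ :=
  ⨆ A : {A : Set Ω // MeasurableSet A}, |(μ A).toReal - (ν A).toReal|

/-- The probability simplex `Δ_k`. -/
def probSimplex (k : ℕ) : Set (Fin k → ℝ) :=
  {w | (∀ i, 0 ≤ w i) ∧ ∑ i, w i = 1}

/-- The class of `k`-mixtures over a class `F` of measures, represented as
pairs of a weight vector in the simplex and a tuple of components from `F`. -/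
def kMixtures {Ω : Type*} [MeasurableSpace Ω] (k : ℕ) (F : Set (Measure Ω)) :
    Set ((Fin k → ℝ) × (Fin k → Measure Ω)) :=
  {p | p.1 ∈ probSimplex k ∧ ∀ i, p.2 i ∈ F}

/-- The component-wise distance `κ_mix` between two `k`-mixtures:
the min over permutations `π` of the max over components of
`max (k·|w_i − w'_{π(i)}|, dTV(f_i, f'_{π(i)}))`. -/
noncomputable def kappaMix {Ω : Type*} [MeasurableSpace Ω] (k : ℕ)
    (p q : (Fin k → ℝ) × (Fin k → Measure Ω)) : ℝ :=
  ⨅ π : Equiv.Perm (Fin k), ⨆ i : Fin k,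
    max ((k : ℝ) * |p.1 i - q.1 (π i)|) (tvDist (p.2 i) (q.2 (π i)))

lemma aux_pow (k m : ℕ) (hk : 1 ≤ k) (hkm : k < m) : (m + 1) ^ (k - 1) ≤ m ^ k := by
  rcases eq_or_lt_of_le hk with h1 | h2
  · simpa [← h1] using Nat.one_le_iff_ne_zero.mpr (by omega)
  · have hm3 : 3 ≤ m := by omega
    have hmR : (0:ℝ) < m := by positivity
    have key : ((m:ℝ) + 1) ^ (k - 1) ≤ (m:ℝ) ^ k := by
      have h1 : ((m:ℝ) + 1) ^ (k-1) = (m:ℝ) ^ (k-1) * (1 + 1/m) ^ (k-1) := by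
        rw [← mul_pow]; congr 1; field_simp
      have h2 : (1 + 1/(m:ℝ)) ^ (k-1) ≤ Real.exp (((k-1 : ℕ):ℝ) * (1/m)) := by
        calc (1 + 1/(m:ℝ)) ^ (k-1) ≤ (Real.exp (1/m)) ^ (k-1) := by
              apply pow_le_pow_left₀ (by positivity)
              rw [add_comm]; exact Real.add_one_le_exp _
          _ = Real.exp (((k-1:ℕ):ℝ) * (1/m)) := by
              rw [← Real.exp_nat_mul]
      have h4 : Real.exp (((k-1 : ℕ):ℝ) * (1/(m:ℝ))) ≤ Real.exp 1 := by
        apply Real.exp_le_exp.2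
        rw [mul_one_div, div_le_one hmR]
        have : ((k-1:ℕ):ℝ) ≤ (m:ℝ) := by exact_mod_cast (by omega : k - 1 ≤ m)
        linarith
      have h5 : Real.exp 1 ≤ 3 := by
        have := Real.exp_one_lt_d9
        linarith
      have h6 : (3:ℝ) ≤ m := by exact_mod_cast hm3
      calc ((m:ℝ)+1)^(k-1) = (m:ℝ)^(k-1) * (1+1/m)^(k-1) := h1
        _ ≤ (m:ℝ)^(k-1) * 3 := by
            apply mul_le_mul_of_nonneg_left _ (by positivity)
            exact h2.trans (h4.trans h5)
        _ ≤ (m:ℝ)^(k-1) * m := by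
            apply mul_le_mul_of_nonneg_left h6 (by positivity)
        _ = (m:ℝ)^k := by
            rw [← pow_succ]; congr 1; omega
    exact_mod_cast key

lemma aux_filter_card (k d : ℕ) (hdk : d ≤ k) :
    (Finset.univ.filter (fun i : Fin k => (i:ℕ) < d)).card = d := by
  have : (Finset.univ.filter (fun i : Fin k => (i:ℕ) < d))
      = Finset.map (Fin.castLEEmb hdk) Finset.univ := by
    ext j
    simp only [Finset.mem_filter, Finset.mem_univ, true_and, Finset.mem_map,
      Fin.castLEEmb, Fin.castLE]
    constructor
    · intro h; exact ⟨⟨j, h⟩, by simp [Fin.ext_iff]⟩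
    · rintro ⟨a, _, rfl⟩; simpa using a.2
  rw [this, Finset.card_map, Finset.card_univ, Fintype.card_fin]

/-- Rounding a simplex point to the grid `(1/m)·ℕ` with per-coordinate error `≤ 1/m`. -/
lemma aux_round (k m : ℕ) (hk : 1 ≤ k) (hm : 0 < m) (w : Fin k → ℝ)
    (hw : w ∈ probSimplex k) :
    ∃ n : Fin k → ℕ, (∑ i, n i = m) ∧ ∀ i, |w i - (n i : ℝ) / m| ≤ 1 / m := by
  have hmR : (0:ℝ) < m := by exact_mod_cast hm
  obtain ⟨hw0, hw1⟩ := hw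
  set b : Fin k → ℕ := fun i => ⌊(m:ℝ) * w i⌋₊ with hb
  have hble : ∀ i, (b i : ℝ) ≤ m * w i := fun i => Nat.floor_le (mul_nonneg hmR.le (hw0 i))
  have hblt : ∀ i, (m:ℝ) * w i < b i + 1 := fun i => Nat.lt_floor_add_one _
  have hsum_le : ∑ i, b i ≤ m := by
    have h : ((∑ i, b i : ℕ) : ℝ) ≤ m := by
      push_cast
      calc ∑ i, (b i : ℝ) ≤ ∑ i, (m:ℝ) * w i := Finset.sum_le_sum (fun i _ => hble i)
        _ = m * ∑ i, w i := by rw [Finset.mul_sum]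
        _ = m := by rw [hw1, mul_one]
    exact_mod_cast h
  have hsum_lt : m < ∑ i, b i + k := by
    have hne : (Finset.univ : Finset (Fin k)).Nonempty := ⟨⟨0, hk⟩, Finset.mem_univ _⟩
    have h : (m:ℝ) < ∑ i, ((b i : ℝ) + 1) := by
      calc (m:ℝ) = m * ∑ i, w i := by rw [hw1, mul_one]
        _ = ∑ i, (m:ℝ) * w i := by rw [Finset.mul_sum]
        _ < ∑ i, ((b i : ℝ) + 1) := Finset.sum_lt_sum_of_nonempty hne (fun i _ => hblt i)
    have h2 : ((m:ℕ):ℝ) < ((∑ i, b i + k : ℕ) : ℝ) := by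
      push_cast
      rw [Finset.sum_add_distrib] at h
      simpa using h
    exact_mod_cast h2
  set d : ℕ := m - ∑ i, b i with hd
  have hdk : d ≤ k := by omega
  refine ⟨fun i => b i + (if (i:ℕ) < d then 1 else 0), ?_, ?_⟩
  · rw [Finset.sum_add_distrib]
    have : ∑ i : Fin k, (if (i:ℕ) < d then 1 else 0)
        = (Finset.univ.filter (fun i : Fin k => (i:ℕ) < d)).card := by
      rw [Finset.card_filter]
    rw [this, aux_filter_card k d hdk]
    omega
  · intro i
    set n : ℕ := b i + (if (i:ℕ) < d then 1 else 0) with hn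
    have h1 : (n:ℝ) ≤ m * w i + 1 := by
      rcases lt_or_ge (i:ℕ) d with h | h
      · simp only [hn, h, if_pos]
        push_cast
        linarith [hble i]
      · simp only [hn, not_lt.2 h, if_neg (not_lt.2 h)]
        push_cast
        linarith [hble i]
    have h2 : (m:ℝ) * w i - 1 ≤ n := by
      have : (b i : ℝ) ≤ n := by
        have : b i ≤ n := by omega
        exact_mod_cast this
      linarith [hblt i]
    have heq : w i - (n:ℝ)/m = (m * w i - n)/m := by field_simp
    rw [heq, abs_div, abs_of_pos hmR, div_le_div_iff_of_pos_right hmR]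
    rw [abs_le]
    constructor <;> linarith

theorem kMixtures_locally_small_cover
    {Ω : Type*} [MeasurableSpace Ω]
    (α γ : ℝ) (hα : 0 < α) (hαγ : α < γ) (hγ : γ < 1)
    (k t : ℕ) (hk : 1 ≤ k) (ht : 1 ≤ t)
    (F : Set (Measure Ω)) (hF : ∀ f ∈ F, IsProbabilityMeasure f)
    (C : Set (Measure Ω)) (hCF : C ⊆ F)
    (hcover : ∀ f ∈ F, ∃ c ∈ C, tvDist f c ≤ α)
    (hsmall : ∀ f ∈ F, ({c ∈ C | tvDist f c ≤ γ}).Finite ∧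
              ({c ∈ C | tvDist f c ≤ γ}).ncard ≤ t) :
    ∃ J ⊆ kMixtures k F,
      (∀ p ∈ kMixtures k F, ∃ q ∈ J, kappaMix k p q ≤ α) ∧
      (∀ p ∈ kMixtures k F,
        ({q ∈ J | kappaMix k p q ≤ γ}).Finite ∧
        ({q ∈ J | kappaMix k p q ≤ γ}).ncard
          ≤ Nat.factorial k * t ^ k * (⌈(k : ℝ) / α⌉₊) ^ k) := by
  classical
  have hk0 : 0 < k := hk
  haveI hne : Nonempty (Fin k) := ⟨⟨0, hk0⟩⟩
  have hα1 : α < 1 := hαγ.trans hγ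
  set m : ℕ := ⌈(k : ℝ) / α⌉₊ with hm_def
  have hmk : k < m := by
    rw [hm_def, Nat.lt_ceil]
    have hkR : (0:ℝ) < k := by exact_mod_cast hk0
    calc (k:ℝ) = k / 1 := (div_one _).symm
      _ < k / α := div_lt_div_of_pos_left hkR hα hα1
  have hm0 : 0 < m := hk0.trans hmk
  have hmR : (0:ℝ) < m := by exact_mod_cast hm0
  have hka : (k:ℝ) * (1/m) ≤ α := by
    rw [mul_one_div, div_le_iff₀ hmR]
    have h1 : (k:ℝ)/α ≤ m := Nat.le_ceil _
    rw [div_le_iff₀ hα] at h1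
    linarith
  set W : Set (Fin k → ℝ) := {w | w ∈ probSimplex k ∧ ∀ i, ∃ n : ℕ, w i = (n:ℝ) / m}
    with hW_def
  refine ⟨{q | q.1 ∈ W ∧ ∀ i, q.2 i ∈ C}, ?_, ?_, ?_⟩
  · intro q hq
    exact ⟨hq.1.1, fun i => hCF (hq.2 i)⟩
  · -- covering
    rintro p ⟨hp1, hp2⟩
    choose c hc1 hc2 using fun i => hcover (p.2 i) (hp2 i)
    obtain ⟨n, hnsum, hnerr⟩ := aux_round k m hk hm0 p.1 hp1
    refine ⟨(fun i => (n i : ℝ)/m, c), ⟨⟨⟨?_, ?_⟩, fun i => ⟨n i, rfl⟩⟩,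
      fun i => hc1 i⟩, ?_⟩
    · intro i; positivity
    · rw [← Finset.sum_div, ← Nat.cast_sum, hnsum]
      exact div_self hmR.ne'
    · have hle : kappaMix k p (fun i => (n i : ℝ)/m, c)
          ≤ ⨆ i, max ((k:ℝ) * |p.1 i - (n i : ℝ)/m|) (tvDist (p.2 i) (c i)) := by
        have := ciInf_le (f := fun π : Equiv.Perm (Fin k) => ⨆ i, max
          ((k:ℝ) * |p.1 i - ((fun i => (n i : ℝ)/m, c) : _ × _).1 (π i)|)
          (tvDist (p.2 i) (c (π i)))) (Set.finite_range _).bddBelow (Equiv.refl (Fin k))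
        simpa [kappaMix] using this
      refine hle.trans (ciSup_le fun i => max_le ?_ (hc2 i))
      calc (k:ℝ) * |p.1 i - (n i:ℝ)/m| ≤ (k:ℝ) * (1/m) :=
            mul_le_mul_of_nonneg_left (hnerr i) (by positivity)
        _ ≤ α := hka
  · -- local smallness
    rintro p ⟨hp1, hp2⟩
    have hD := fun i => hsmall (p.2 i) (hp2 i)
    set Dfin : Fin k → Finset (Measure Ω) := fun i => (hD i).1.toFinset with hDfin_def
    have hDcard : ∀ i, (Dfin i).card ≤ t := by
      intro i
      rw [hDfin_def]
      rw [← Set.ncard_eq_toFinset_card _ (hD i).1]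
      exact (hD i).2
    set Gfin : Finset ℝ := (Finset.range (m+1)).image (fun j : ℕ => (j:ℝ)/m) with hGfin_def
    have hGcard : Gfin.card ≤ m + 1 := (Finset.card_image_le).trans (by simp)
    have hWG : ∀ w ∈ W, ∀ i, w i ∈ Gfin := by
      intro w hw i
      obtain ⟨nn, hnn⟩ := hw.2 i
      have hwi1 : w i ≤ 1 := by
        have := Finset.single_le_sum (f := w) (fun j _ => hw.1.1 j) (Finset.mem_univ i)
        rw [hw.1.2] at this; exact this
      have hnm : nn ≤ m := by
        rw [hnn, div_le_one hmR] at hwi1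
        exact_mod_cast hwi1
      exact Finset.mem_image.2 ⟨nn, Finset.mem_range.2 (by omega), hnn.symm⟩
    have hWfin : W.Finite := by
      apply Set.Finite.subset (Fintype.piFinset (fun _ : Fin k => Gfin)).finite_toSet
      intro w hw
      rw [Finset.mem_coe, Fintype.mem_piFinset]
      exact fun i => hWG w hw i
    have hWcard : W.ncard ≤ m ^ k := by
      set j₀ : Fin k := ⟨0, hk0⟩ with hj₀
      set Φ : (Fin k → ℝ) → ({j : Fin k // j ≠ j₀} → ℝ) := fun w j => w j.1 with hΦ
      set T : Finset ({j : Fin k // j ≠ j₀} → ℝ) :=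
        Fintype.piFinset (fun _ => Gfin) with hT
      have hmaps : ∀ w ∈ W, Φ w ∈ (T : Set _) := by
        intro w hw
        rw [Finset.mem_coe, hT, Fintype.mem_piFinset]
        exact fun j => hWG w hw j.1
      have hinj : Set.InjOn Φ W := by
        intro w hw w' hw' hww
        have hoff : ∀ j : Fin k, j ≠ j₀ → w j = w' j := by
          intro j hj
          exact congrFun hww ⟨j, hj⟩
        have hsum : ∀ v : Fin k → ℝ, (∑ i, v i = 1) →
            v j₀ = 1 - ∑ j ∈ Finset.univ.erase j₀, v j := by
          intro v hv
          have h := Finset.add_sum_erase Finset.univ v (Finset.mem_univ j₀)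
          rw [hv] at h
          linarith
        have he : ∑ j ∈ Finset.univ.erase j₀, w j = ∑ j ∈ Finset.univ.erase j₀, w' j :=
          Finset.sum_congr rfl (fun j hj => hoff j (Finset.ne_of_mem_erase hj))
        funext j
        by_cases hj : j = j₀
        · rw [hj, hsum w hw.1.2, hsum w' hw'.1.2, he]
        · exact hoff j hj
      have hcount := Set.ncard_le_ncard_of_injOn Φ hmaps hinj (T.finite_toSet)
      rw [Set.ncard_coe_finset] at hcount
      have hsub_card : Fintype.card {j : Fin k // j ≠ j₀} = k - 1 := by
        simp [Fintype.card_subtype_compl]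
      have hTcard : T.card ≤ (m+1)^(k-1) := by
        rw [hT, Fintype.card_piFinset, Finset.prod_const, Finset.card_univ, hsub_card]
        exact Nat.pow_le_pow_left hGcard _
      exact hcount.trans (hTcard.trans (aux_pow k m hk hmk))
    set Ufin : Finset (Fin k → Measure Ω) :=
      Finset.univ.biUnion (fun π : Equiv.Perm (Fin k) =>
        Fintype.piFinset (fun j => Dfin (π.symm j))) with hUfin_def
    have hUcard : Ufin.card ≤ k.factorial * t ^ k := by
      refine (Finset.card_biUnion_le).trans ?_
      have hbound : ∀ π : Equiv.Perm (Fin k),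
          (Fintype.piFinset (fun j => Dfin (π.symm j))).card ≤ t ^ k := by
        intro π
        rw [Fintype.card_piFinset]
        calc ∏ j : Fin k, (Dfin (π.symm j)).card ≤ ∏ _j : Fin k, t :=
              Finset.prod_le_prod' (fun j _ => hDcard _)
          _ = t ^ k := by simp [Finset.prod_const]
      calc ∑ π : Equiv.Perm (Fin k), (Fintype.piFinset (fun j => Dfin (π.symm j))).card
          ≤ ∑ _π : Equiv.Perm (Fin k), t^k := Finset.sum_le_sum (fun π _ => hbound π)
        _ = k.factorial * t^k := by
            rw [Finset.sum_const, Finset.card_univ, smul_eq_mul, Fintype.card_perm,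
              Fintype.card_fin]
    set Tfin := hWfin.toFinset ×ˢ Ufin with hTfin_def
    have hsubset : {q ∈ {q : (Fin k → ℝ) × (Fin k → Measure Ω) | q.1 ∈ W ∧ ∀ i, q.2 i ∈ C} |
        kappaMix k p q ≤ γ} ⊆ ↑Tfin := by
      rintro q ⟨hqJ, hqγ⟩
      have hgoal : ∃ π : Equiv.Perm (Fin k), ∀ i, tvDist (p.2 i) (q.2 (π i)) ≤ γ := by
        set g : Equiv.Perm (Fin k) → ℝ := fun π => ⨆ i,
          max ((k:ℝ)*|p.1 i - q.1 (π i)|) (tvDist (p.2 i) (q.2 (π i))) with hg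
        obtain ⟨π₀, hπ₀⟩ := Finite.exists_min g
        have h1 : g π₀ ≤ γ := by
          refine le_trans (le_ciInf hπ₀) ?_
          exact hqγ
        refine ⟨π₀, fun i => ?_⟩
        have h2 : (fun i => max ((k:ℝ)*|p.1 i - q.1 (π₀ i)|) (tvDist (p.2 i) (q.2 (π₀ i)))) i
            ≤ g π₀ :=
          le_ciSup (f := fun i => max ((k:ℝ)*|p.1 i - q.1 (π₀ i)|)
            (tvDist (p.2 i) (q.2 (π₀ i)))) (Set.finite_range _).bddAbove i
        exact le_trans (le_trans (le_max_right _ _) h2) h1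
      obtain ⟨π₀, hπ₀⟩ := hgoal
      rw [Finset.mem_coe, hTfin_def, Finset.mem_product]
      constructor
      · rw [Set.Finite.mem_toFinset]; exact hqJ.1
      · rw [hUfin_def]
        refine Finset.mem_biUnion.2 ⟨π₀, Finset.mem_univ _, Fintype.mem_piFinset.2 (fun j => ?_)⟩
        rw [hDfin_def, Set.Finite.mem_toFinset]
        refine ⟨hqJ.2 j, ?_⟩
        have := hπ₀ (π₀.symm j)
        rwa [Equiv.apply_symm_apply] at this
    refine ⟨Set.Finite.subset Tfin.finite_toSet hsubset, ?_⟩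
    calc ({q ∈ {q : (Fin k → ℝ) × (Fin k → Measure Ω) | q.1 ∈ W ∧ ∀ i, q.2 i ∈ C} |
            kappaMix k p q ≤ γ}).ncard
        ≤ (↑Tfin : Set _).ncard := Set.ncard_le_ncard hsubset Tfin.finite_toSet
      _ = Tfin.card := Set.ncard_coe_finset _
      _ = hWfin.toFinset.card * Ufin.card := by rw [hTfin_def, Finset.card_product]
      _ ≤ m^k * (k.factorial * t^k) := by
          refine Nat.mul_le_mul ?_ hUcard
          rw [← Set.ncard_eq_toFinset_card _ hWfin]
          exact hWcard
      _ = k.factorial * t^k * m^k := by ring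
end

section
/- Let c₁, c₂ ≥ 1 be real numbers and let β ∈ (0,1]. Define β' = β / (2·e·c₁·log(e·c₁·c₂/β)), where e is Euler's number and log is the natural logarithm. Then β' ≤ β/(2·e·c₁), β/(2·e·c₁) ≤ 1/(e·c₁), and c₁·β'·log(c₂/β') ≤ β. -/
theorem failure_prob_claim
    (c₁ c₂ β : ℝ) (hc₁ : 1 ≤ c₁) (hc₂ : 1 ≤ c₂) (hβ : β ∈ Set.Ioc (0 : ℝ) 1) :
    β / (2 * Real.exp 1 * c₁ * Real.log (Real.exp 1 * c₁ * c₂ / β))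
        ≤ β / (2 * Real.exp 1 * c₁) ∧
    β / (2 * Real.exp 1 * c₁) ≤ 1 / (Real.exp 1 * c₁) ∧
    c₁ * (β / (2 * Real.exp 1 * c₁ * Real.log (Real.exp 1 * c₁ * c₂ / β))) *
        Real.log (c₂ / (β / (2 * Real.exp 1 * c₁ * Real.log (Real.exp 1 * c₁ * c₂ / β))))
      ≤ β := by
  obtain ⟨hβ0, hβ1⟩ := hβ
  set e := Real.exp 1 with he_def
  have he : (2:ℝ) ≤ e := by
    have := Real.add_one_le_exp 1; linarith
  have he0 : (0:ℝ) < e := by linarith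
  have hc₁0 : (0:ℝ) < c₁ := by linarith
  have hc₂0 : (0:ℝ) < c₂ := by linarith
  have hA0 : 0 < e * c₁ * c₂ / β := by positivity
  have hL1 : 1 ≤ Real.log (e * c₁ * c₂ / β) := by
    rw [Real.le_log_iff_exp_le hA0, ← he_def, le_div_iff₀ hβ0]
    have h1 : (1:ℝ) ≤ c₁ * c₂ := by nlinarith
    nlinarith [mul_le_mul_of_nonneg_left (hβ1.trans h1) he0.le]
  set L := Real.log (e * c₁ * c₂ / β) with hL_def
  have hL0 : (0:ℝ) < L := by linarith
  clear_value L e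
  refine ⟨?_, ?_, ?_⟩
  · apply div_le_div_of_nonneg_left hβ0.le (by positivity)
    nlinarith [mul_le_mul_of_nonneg_left hL1 (by positivity : (0:ℝ) ≤ 2 * e * c₁)]
  · rw [div_le_div_iff₀ (by positivity) (by positivity)]
    have hec : (0:ℝ) < e * c₁ := mul_pos he0 hc₁0
    nlinarith [mul_le_mul_of_nonneg_right hβ1 hec.le, hec]
  · have hlog : Real.log (c₂ / (β / (2 * e * c₁ * L))) = Real.log (2 * L) + L := by
      have h : c₂ / (β / (2 * e * c₁ * L)) = (2 * L) * (e * c₁ * c₂ / β) := by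
        field_simp
      rw [h, Real.log_mul (by positivity) (by positivity), hL_def]
    have hlog2 : Real.log (2 * L) ≤ 2 * L - 1 := Real.log_le_sub_one_of_pos (by positivity)
    have hbound : Real.log (c₂ / (β / (2 * e * c₁ * L))) ≤ 2 * e * L := by
      rw [hlog]; nlinarith
    have hkey : c₁ * (β / (2 * e * c₁ * L)) * (2 * e * L) = β := by
      field_simp
    calc c₁ * (β / (2 * e * c₁ * L)) * Real.log (c₂ / (β / (2 * e * c₁ * L)))
        ≤ c₁ * (β / (2 * e * c₁ * L)) * (2 * e * L) :=
          mul_le_mul_of_nonneg_left hbound (by positivity)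
      _ = β := hkey
end

section
/- Let γ ∈ [0,1), β ∈ (0,1), and let m, N be natural numbers with N ≥ (2m + 8·log(1/β))/(1−γ). If X is a random variable with the Binomial(N, 1−γ) distribution (the number of successes in N independent trials each succeeding with probability 1−γ), then P(X ≤ m) ≤ β. -/
open Finset

theorem binomial_tail_le
    (γ β : ℝ) (hγ : γ ∈ Set.Ico (0 : ℝ) 1) (hβ : β ∈ Set.Ioo (0 : ℝ) 1)
    (m N : ℕ)
    (hN : (2 * m + 8 * Real.log (1 / β)) / (1 - γ) ≤ (N : ℝ)) :
    ∑ j ∈ Finset.range (m + 1),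
        (N.choose j : ℝ) * (1 - γ) ^ j * γ ^ (N - j) ≤ β := by
  obtain ⟨hγ0, hγ1⟩ := hγ
  obtain ⟨hβ0, hβ1⟩ := hβ
  set p : ℝ := 1 - γ with hp
  have hp0 : 0 < p := by simp only [hp]; linarith
  have hp1 : p ≤ 1 := by simp only [hp]; linarith
  set L : ℝ := Real.log (1 / β) with hL
  have hL0 : 0 < L := Real.log_pos (by rw [lt_div_iff₀ hβ0]; linarith)
  have hpN : 2 * m + 8 * L ≤ p * N := by
    rw [div_le_iff₀ hp0] at hN; linarith
  have hmN : m < N := by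
    have h1 : (m : ℝ) < N := by nlinarith
    exact_mod_cast h1
  -- Step 1: termwise bound by 2^m times the tilted terms
  have step1 : ∑ j ∈ Finset.range (m + 1),
      (N.choose j : ℝ) * p ^ j * γ ^ (N - j)
      ≤ ∑ j ∈ Finset.range (m + 1),
        2 ^ m * ((N.choose j : ℝ) * (p / 2) ^ j * γ ^ (N - j)) := by
    apply Finset.sum_le_sum
    intro j hj
    have hjm : j ≤ m := Nat.lt_succ_iff.mp (Finset.mem_range.mp hj)
    have h2j : (2 : ℝ) ^ j ≤ 2 ^ m := pow_le_pow_right₀ one_le_two hjm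
    have hpow : p ^ j ≤ 2 ^ m * (p / 2) ^ j := by
      rw [div_pow]
      rw [mul_div_assoc', le_div_iff₀ (by positivity)]
      nlinarith [pow_nonneg hp0.le j]
    have hc : (0 : ℝ) ≤ (N.choose j : ℝ) := Nat.cast_nonneg _
    have hg : (0 : ℝ) ≤ γ ^ (N - j) := pow_nonneg hγ0 _
    calc (N.choose j : ℝ) * p ^ j * γ ^ (N - j)
        ≤ (N.choose j : ℝ) * (2 ^ m * (p / 2) ^ j) * γ ^ (N - j) := by
          apply mul_le_mul_of_nonneg_right _ hg
          exact mul_le_mul_of_nonneg_left hpow hc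
      _ = 2 ^ m * ((N.choose j : ℝ) * (p / 2) ^ j * γ ^ (N - j)) := by ring
  -- Step 2: extend sum to range (N+1) and apply binomial theorem
  have step2 : ∑ j ∈ Finset.range (m + 1),
      (N.choose j : ℝ) * (p / 2) ^ j * γ ^ (N - j)
      ≤ (γ + p / 2) ^ N := by
    have hsub : Finset.range (m + 1) ⊆ Finset.range (N + 1) :=
      Finset.range_subset_range.mpr (by omega)
    have h1 : ∑ j ∈ Finset.range (m + 1),
        (N.choose j : ℝ) * (p / 2) ^ j * γ ^ (N - j)
        ≤ ∑ j ∈ Finset.range (N + 1),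
          (N.choose j : ℝ) * (p / 2) ^ j * γ ^ (N - j) := by
      apply Finset.sum_le_sum_of_subset_of_nonneg hsub
      intro j _ _
      have hc : (0 : ℝ) ≤ (N.choose j : ℝ) := Nat.cast_nonneg _
      positivity
    have h2 : ∑ j ∈ Finset.range (N + 1),
        (N.choose j : ℝ) * (p / 2) ^ j * γ ^ (N - j) = (γ + p / 2) ^ N := by
      rw [add_comm γ (p / 2), add_pow]
      apply Finset.sum_congr rfl
      intro j _
      ring
    linarith
  -- Step 3: exponential bound
  have hq0 : (0 : ℝ) ≤ γ + p / 2 := by linarith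
  have hexp : γ + p / 2 ≤ Real.exp (-(p / 2)) := by
    have := Real.add_one_le_exp (-(p / 2))
    simp only [hp] at *
    linarith
  have step3 : (γ + p / 2) ^ N ≤ Real.exp (-(p / 2) * N) := by
    calc (γ + p / 2) ^ N ≤ Real.exp (-(p / 2)) ^ N := pow_le_pow_left₀ hq0 hexp N
      _ = Real.exp (-(p / 2) * N) := by
          rw [← Real.exp_nat_mul]; ring_nf
  -- Step 4: combine
  have h2m : (2 : ℝ) ^ m = Real.exp (m * Real.log 2) := by
    rw [Real.exp_nat_mul, Real.exp_log two_pos]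
  have hlog2 : Real.log 2 ≤ 1 := by
    have := Real.log_two_lt_d9; linarith
  have hmlog : (m : ℝ) * Real.log 2 ≤ m := by
    nlinarith [Nat.cast_nonneg (α := ℝ) m]
  have hlogβ : Real.log β = -L := by
    rw [hL, one_div, Real.log_inv, neg_neg]
  have final : (2 : ℝ) ^ m * Real.exp (-(p / 2) * N) ≤ β := by
    rw [h2m, ← Real.exp_add]
    calc Real.exp (m * Real.log 2 + -(p / 2) * N)
        ≤ Real.exp (Real.log β) := by
          apply Real.exp_le_exp.mpr
          rw [hlogβ]
          nlinarith [hpN, hmlog, hL0]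
      _ = β := Real.exp_log hβ0
  have hsum2 : (0:ℝ) ≤ 2 ^ m := by positivity
  calc ∑ j ∈ Finset.range (m + 1),
        (N.choose j : ℝ) * (1 - γ) ^ j * γ ^ (N - j)
      = ∑ j ∈ Finset.range (m + 1),
        (N.choose j : ℝ) * p ^ j * γ ^ (N - j) := by rw [hp]
    _ ≤ ∑ j ∈ Finset.range (m + 1),
        2 ^ m * ((N.choose j : ℝ) * (p / 2) ^ j * γ ^ (N - j)) := step1
    _ = 2 ^ m * ∑ j ∈ Finset.range (m + 1),
        (N.choose j : ℝ) * (p / 2) ^ j * γ ^ (N - j) := by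
          rw [Finset.mul_sum]
    _ ≤ 2 ^ m * (γ + p / 2) ^ N := by
          exact mul_le_mul_of_nonneg_left step2 hsum2
    _ ≤ 2 ^ m * Real.exp (-(p / 2) * N) :=
          mul_le_mul_of_nonneg_left step3 hsum2
    _ ≤ β := final
end
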